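/- For all integers m ≥ 0 and n ≥ 0, the binomial coefficient C(2n, m) equals the sum over k from 0 to n of 2^(m-2k) · C(n-k, m-2k) · C(n, k), where binomial coefficients with negative arguments are zero. -/
import Mathlib

open Polynomial

lemma coeff_q (j i : ℕ) : ((C 2 * X + C 1 : Polynomial ℕ) ^ j).coeff i = 2 ^ i * j.choose i := by
  rw [add_pow, finset_sum_coeff]
  simp only [mul_pow, one_pow, mul_one, ← C_pow, ← C_eq_natCast, mul_assoc, coeff_C_mul,
    coeff_mul_C, coeff_X_pow, Nat.cast_id, ite_mul, one_mul, zero_mul, mul_ite, mul_zero]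
  by_cases h : i ≤ j
  · rw [Finset.sum_eq_single i]
    · simp
    · intro b _ hb; simp [Ne.symm hb]
    · intro h'; simp at h'; omega
  · rw [Finset.sum_eq_zero, Nat.choose_eq_zero_of_lt (by omega)]
    · simp
    · intro b hb
      simp only [Finset.mem_range] at hb
      have : i ≠ b := by omega
      simp [this]

theorem stmt0 (m n : ℕ) :
    (2 * n).choose m =
      ∑ k ∈ Finset.range (n + 1),
        if 2 * k ≤ m then 2 ^ (m - 2 * k) * (n - k).choose (m - 2 * k) * n.choose k
        else 0 := by
  have h1 : ((X + C 1 : Polynomial ℕ) ^ (2 * n)).coeff m = (2 * n).choose m := by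
    rw [coeff_X_add_C_pow]; simp
  have h2 : (X + C 1 : Polynomial ℕ) ^ (2 * n)
      = ((X : Polynomial ℕ) ^ 2 + (C 2 * X + C 1)) ^ n := by
    rw [pow_mul]
    congr 1
    have : (C 2 : Polynomial ℕ) = C 1 + C 1 := by norm_num
    rw [this]; ring_nf; simp
  rw [← h1, h2, add_pow, finset_sum_coeff]
  apply Finset.sum_congr rfl
  intro k hk
  rw [← C_eq_natCast, ← pow_mul,
    mul_comm (X ^ (2 * k) : Polynomial ℕ) ((C 2 * X + C 1 : Polynomial ℕ) ^ (n - k)),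
    coeff_mul_C, coeff_mul_X_pow']
  split
  · rw [coeff_q]; push_cast; ring
  · simp
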